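/- Let H be a complex Hilbert space, let k be an integer with 4 ≤ 2k ≤ dim H and k ≤ dim H − 4, and let X, Y be k-dimensional subspaces of H whose distance in the ortho-Grassmann graph Γ⊥_k(H) equals 2. Then X and Y are adjacent and non-compatible if and only if there are infinitely many k-dimensional subspaces Z of H ortho-adjacent to both X and Y and such that there are infinitely many k-dimensional subspaces Z' of H ortho-adjacent to each of X, Y and Z. -/

import Mathlib

noncomputable section

open scoped Classical

variable {H : Type*} [NormedAddCommGroup H] [InnerProductSpace ℂ H] [CompleteSpace H]

/-- The orthogonal projection onto `X`, as an operator `H → H` (junk value `0` if the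
orthogonal projection onto `X` does not exist; it always exists for finite-dimensional,
and more generally complete, subspaces). -/
noncomputable def projOn (X : Submodule ℂ H) : H →L[ℂ] H :=
  if h : Submodule.HasOrthogonalProjection X then
    haveI := h
    X.subtypeL.comp (X.orthogonalProjectionOnto)
  else 0

/-- Two subspaces of `H` are compatible if their orthogonal projections commute. -/
def Compatible (X Y : Submodule ℂ H) : Prop :=
  projOn X * projOn Y = projOn Y * projOn X

/-- `X` is a `k`-dimensional subspace of `H`. -/
def IsDim (k : ℕ) (X : Submodule ℂ H) : Prop :=
  FiniteDimensional ℂ X ∧ Module.finrank ℂ X = k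

/-- Two (distinct) `k`-dimensional subspaces are adjacent if their intersection is
`(k-1)`-dimensional. -/
def AdjacentSub (k : ℕ) (X Y : Submodule ℂ H) : Prop :=
  X ≠ Y ∧ Module.finrank ℂ ↥(X ⊓ Y) = k - 1

/-- Ortho-adjacency: adjacent and compatible. -/
def OrthoAdjacent (k : ℕ) (X Y : Submodule ℂ H) : Prop :=
  AdjacentSub k X Y ∧ Compatible X Y

/-- The ortho-Grassmann graph `Γ⊥_k(H)` on the `k`-dimensional subspaces of `H`:
two `k`-dimensional subspaces are connected by an edge if they are ortho-adjacent. -/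
def orthoGrassmannGraph (H : Type*) [NormedAddCommGroup H] [InnerProductSpace ℂ H]
    [CompleteSpace H] (k : ℕ) : SimpleGraph {X : Submodule ℂ H // IsDim k X} where
  Adj X Y := OrthoAdjacent k X.1 Y.1
  symm := ⟨by
    rintro X Y ⟨⟨hne, hdim⟩, hc⟩
    refine ⟨⟨hne.symm, by rwa [inf_comm]⟩, ?_⟩
    unfold Compatible at hc ⊢
    exact hc.symm⟩
  loopless := ⟨fun X h => h.1.1 rfl⟩

/-- The Grassmann graph `Γ_k(H)` on the `k`-dimensional subspaces of `H`:
two `k`-dimensional subspaces are connected by an edge if they are adjacent. -/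
def grassmannGraph (H : Type*) [NormedAddCommGroup H] [InnerProductSpace ℂ H]
    [CompleteSpace H] (k : ℕ) : SimpleGraph {X : Submodule ℂ H // IsDim k X} where
  Adj X Y := AdjacentSub k X.1 Y.1
  symm := ⟨by
    rintro X Y ⟨hne, hdim⟩
    exact ⟨hne.symm, by rwa [inf_comm]⟩⟩
  loopless := ⟨fun X h => h.1 rfl⟩

set_option linter.unusedSectionVars false

section Basics

open Module Submodule

variable {H : Type*} [NormedAddCommGroup H] [InnerProductSpace ℂ H] [CompleteSpace H]

local notation:max "fr " p:max => Module.finrank ℂ ↥p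

lemma projOn_apply_eq (U : Submodule ℂ H) [HasOrthogonalProjection U] (x : H) :
    projOn U x = (orthogonalProjection U x : H) := by
  unfold projOn
  rw [dif_pos ‹HasOrthogonalProjection U›]
  rfl

lemma projOn_eq_of {U : Submodule ℂ H} [HasOrthogonalProjection U] {x u : H}
    (hu : u ∈ U) (hx : x - u ∈ Uᗮ) : projOn U x = u := by
  rw [projOn_apply_eq]
  exact Submodule.eq_starProjection_of_mem_orthogonal hu hx

lemma projOn_mem (U : Submodule ℂ H) [HasOrthogonalProjection U] (x : H) :
    projOn U x ∈ U := by
  rw [projOn_apply_eq]; exact (orthogonalProjection U x).2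

lemma sub_projOn_mem (U : Submodule ℂ H) [HasOrthogonalProjection U] (x : H) :
    x - projOn U x ∈ Uᗮ := by
  rw [projOn_apply_eq]; exact Submodule.sub_starProjection_mem_orthogonal x

lemma projOn_of_mem {U : Submodule ℂ H} [HasOrthogonalProjection U] {x : H}
    (hx : x ∈ U) : projOn U x = x :=
  projOn_eq_of hx (by simp)

lemma projOn_of_mem_orthogonal {U : Submodule ℂ H} [HasOrthogonalProjection U] {x : H}
    (hx : x ∈ Uᗮ) : projOn U x = 0 :=
  projOn_eq_of (zero_mem U) (by simpa)

lemma orth_symm {A B : Submodule ℂ H} (h : A ≤ Bᗮ) : B ≤ Aᗮ :=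
  fun b hb => (Submodule.mem_orthogonal A b).2 fun a ha =>
    inner_eq_zero_symm.1 ((Submodule.mem_orthogonal B a).1 (h ha) b hb)

lemma compat_symm {A B : Submodule ℂ H} (h : Compatible A B) : Compatible B A := h.symm

lemma compatible_iff_forall {A B : Submodule ℂ H} :
    Compatible A B ↔ ∀ x, projOn A (projOn B x) = projOn B (projOn A x) := by
  constructor
  · intro h x
    exact DFunLike.congr_fun h x
  · intro h
    exact ContinuousLinearMap.ext h

lemma compat_of_le {A B : Submodule ℂ H} [HasOrthogonalProjection A]
    [HasOrthogonalProjection B] (h : A ≤ B) : Compatible A B := by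
  rw [compatible_iff_forall]
  intro x
  have h1 : projOn B (projOn A x) = projOn A x := projOn_of_mem (h (projOn_mem A x))
  have h2 : projOn A (projOn B x) = projOn A x := by
    refine projOn_eq_of (projOn_mem A x) ?_
    have he : projOn B x - projOn A x = (x - projOn A x) - (x - projOn B x) := by abel
    rw [he]
    exact Submodule.sub_mem _ (sub_projOn_mem A x)
      (Submodule.orthogonal_le h (sub_projOn_mem B x))
  rw [h1, h2]

lemma projOn_projOn_of_orth {A B : Submodule ℂ H} [HasOrthogonalProjection A]
    [HasOrthogonalProjection B] (h : A ≤ Bᗮ) (x : H) :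
    projOn A (projOn B x) = 0 :=
  projOn_of_mem_orthogonal (orth_symm h (projOn_mem B x))

lemma compat_of_orth {A B : Submodule ℂ H} [HasOrthogonalProjection A]
    [HasOrthogonalProjection B] (h : A ≤ Bᗮ) : Compatible A B := by
  rw [compatible_iff_forall]
  intro x
  rw [projOn_projOn_of_orth h, projOn_projOn_of_orth (orth_symm h)]

lemma projOn_sup {A B : Submodule ℂ H} [HasOrthogonalProjection A]
    [HasOrthogonalProjection B] [HasOrthogonalProjection (A ⊔ B)]
    (h : B ≤ Aᗮ) (x : H) :
    projOn (A ⊔ B) x = projOn A x + projOn B x := by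
  refine projOn_eq_of
    (Submodule.add_mem _ (le_sup_left (a := A) (b := B) (projOn_mem A x))
      (le_sup_right (a := A) (b := B) (projOn_mem B x))) ?_
  have hA : x - projOn A x - projOn B x ∈ Aᗮ :=
    Submodule.sub_mem _ (sub_projOn_mem A x) (h (projOn_mem B x))
  have hB : x - projOn A x - projOn B x ∈ Bᗮ := by
    have he : x - projOn A x - projOn B x = (x - projOn B x) - projOn A x := by abel
    rw [he]
    exact Submodule.sub_mem _ (sub_projOn_mem B x) (orth_symm h (projOn_mem A x))
  have hmem : x - (projOn A x + projOn B x) ∈ Aᗮ ⊓ Bᗮ := by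
    constructor
    · simpa [sub_add_eq_sub_sub] using hA
    · simpa [sub_add_eq_sub_sub] using hB
  intro w hw
  rcases Submodule.mem_sup.1 hw with ⟨a, ha, b, hb, rfl⟩
  have h1 := (Submodule.mem_orthogonal A _).1 hmem.1 a ha
  have h2 := (Submodule.mem_orthogonal B _).1 hmem.2 b hb
  rw [inner_add_left, h1, h2, add_zero]

end Basics
section Part2

open Module Submodule

variable {H : Type*} [NormedAddCommGroup H] [InnerProductSpace ℂ H] [CompleteSpace H]

local notation:max "fr " p:max => Module.finrank ℂ ↥p

lemma compat_decomp {A B : Submodule ℂ H} [HasOrthogonalProjection A]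
    [HasOrthogonalProjection B] (h : Compatible A B) {a : H} (ha : a ∈ A) :
    projOn B a ∈ A ⊓ B ∧ a - projOn B a ∈ A ⊓ Bᗮ := by
  have h1 : projOn B a ∈ A := by
    have := (compatible_iff_forall.1 h) a
    rw [projOn_of_mem ha] at this
    rw [← this]
    exact projOn_mem A _
  exact ⟨⟨h1, projOn_mem B a⟩, ⟨Submodule.sub_mem _ ha h1, sub_projOn_mem B a⟩⟩

lemma compat_sup_eq {A B : Submodule ℂ H} [HasOrthogonalProjection A]
    [HasOrthogonalProjection B] (h : Compatible A B) :
    (A ⊓ B) ⊔ (A ⊓ Bᗮ) = A := by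
  apply le_antisymm (sup_le inf_le_left inf_le_left)
  intro a ha
  obtain ⟨h1, h2⟩ := compat_decomp h ha
  have : a = projOn B a + (a - projOn B a) := by abel
  rw [this]
  exact Submodule.add_mem _ (le_sup_left (a := A ⊓ B) (h1)) (le_sup_right (a := A ⊓ B) h2)

lemma compat_finrank {A B : Submodule ℂ H} [FiniteDimensional ℂ A]
    [FiniteDimensional ℂ B] (h : Compatible A B) :
    fr (A ⊓ B) + fr (A ⊓ Bᗮ) = fr A := by
  have hbot : (A ⊓ B) ⊓ (A ⊓ Bᗮ) = ⊥ := by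
    apply le_antisymm _ bot_le
    intro z hz
    have h1 : z ∈ B ⊓ Bᗮ := ⟨hz.1.2, hz.2.2⟩
    rwa [Submodule.inf_orthogonal_eq_bot] at h1
  haveI : FiniteDimensional ℂ ↥(A ⊓ Bᗮ) := Submodule.finiteDimensional_inf_left A Bᗮ
  have := Submodule.finrank_sup_add_finrank_inf_eq (A ⊓ B) (A ⊓ Bᗮ)
  rw [hbot, compat_sup_eq h] at this
  simpa using this.symm

/-- If `M ≤ V` then `V = M ⊔ (V ⊓ Mᗮ)`. -/
lemma sup_inf_orth_of_le {M V : Submodule ℂ H} [FiniteDimensional ℂ V]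
    (h : M ≤ V) : M ⊔ (V ⊓ Mᗮ) = V := by
  haveI : FiniteDimensional ℂ M := Submodule.finiteDimensional_of_le h
  have hc : Compatible V M := compat_symm (compat_of_le h)
  have := compat_sup_eq hc
  rwa [inf_eq_right.mpr h] at this

lemma finrank_inf_orth_of_le {M V : Submodule ℂ H} [FiniteDimensional ℂ V]
    (h : M ≤ V) : fr M + fr (V ⊓ Mᗮ) = fr V := by
  haveI : FiniteDimensional ℂ M := Submodule.finiteDimensional_of_le h
  have hc : Compatible V M := compat_symm (compat_of_le h)
  have := compat_finrank hc
  rwa [inf_eq_right.mpr h] at this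

/-- 1-dimensional subspaces: existence of a spanning vector. -/
lemma exists_ne_zero_of_finrank_one {V : Submodule ℂ H} [FiniteDimensional ℂ V]
    (h : fr V = 1) : ∃ v, v ∈ V ∧ v ≠ 0 := by
  have : V ≠ ⊥ := by
    intro hb
    rw [hb] at h
    simp [finrank_bot] at h
  exact Submodule.exists_mem_ne_zero_of_ne_bot this

lemma eq_span_of_finrank_one {V : Submodule ℂ H} [FiniteDimensional ℂ V]
    (h : fr V = 1) {v : H} (hv : v ∈ V) (hv0 : v ≠ 0) : V = ℂ ∙ v := by
  have hle : (ℂ ∙ v) ≤ V := by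
    rw [Submodule.span_le]; simpa using hv
  exact (Submodule.eq_of_le_of_finrank_le hle (by rw [h, finrank_span_singleton hv0])).symm

/-- `A ≤ L`, `B ≤ L`, disjoint, dimensions add up: then `A ⊔ B = L`. -/
lemma sup_eq_of_disjoint_finrank {A B L : Submodule ℂ H} [FiniteDimensional ℂ L]
    (hA : A ≤ L) (hB : B ≤ L) (hdisj : A ⊓ B = ⊥) (hfr : fr A + fr B = fr L) :
    A ⊔ B = L := by
  haveI : FiniteDimensional ℂ A := Submodule.finiteDimensional_of_le hA
  haveI : FiniteDimensional ℂ B := Submodule.finiteDimensional_of_le hB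
  have h1 := Submodule.finrank_sup_add_finrank_inf_eq A B
  rw [hdisj] at h1
  simp only [finrank_bot, add_zero] at h1
  exact Submodule.eq_of_le_of_finrank_le (sup_le hA hB) (by omega)

end Part2
section Part3

open Module Submodule

variable {H : Type*} [NormedAddCommGroup H] [InnerProductSpace ℂ H] [CompleteSpace H]

local notation:max "fr " p:max => Module.finrank ℂ ↥p

lemma span_le_orth {N : Submodule ℂ H} {v : H} (hv : v ∈ Nᗮ) : (ℂ ∙ v) ≤ Nᗮ := by
  rw [Submodule.span_le]; simpa using hv

lemma isdim_sup_line {k : ℕ} (hk : 1 ≤ k) {N : Submodule ℂ H} [FiniteDimensional ℂ N]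
    (hN : fr N = k - 1) {v : H} (hv : v ∈ Nᗮ) (hv0 : v ≠ 0) : IsDim k (N ⊔ ℂ ∙ v) := by
  refine ⟨inferInstance, ?_⟩
  have hdisj : N ⊓ (ℂ ∙ v) = ⊥ := by
    apply le_antisymm _ bot_le
    intro z hz
    have : z ∈ N ⊓ Nᗮ := ⟨hz.1, span_le_orth hv hz.2⟩
    rwa [Submodule.inf_orthogonal_eq_bot] at this
  have h1 := Submodule.finrank_sup_add_finrank_inf_eq N (ℂ ∙ v)
  rw [hdisj, finrank_span_singleton hv0, hN] at h1
  simp only [finrank_bot, add_zero] at h1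
  omega

lemma orthoAdj_helper {k : ℕ} {N X : Submodule ℂ H} [FiniteDimensional ℂ N]
    [FiniteDimensional ℂ X] (hNX : N ≤ X) (hN : fr N = k - 1)
    {v : H} (hv : v ∈ Xᗮ) (hv0 : v ≠ 0) :
    OrthoAdjacent k (N ⊔ ℂ ∙ v) X := by
  have hvN : v ∈ Nᗮ := Submodule.orthogonal_le hNX hv
  have hinf : (N ⊔ ℂ ∙ v) ⊓ X = N := by
    apply le_antisymm
    · rintro z ⟨hz1, hz2⟩
      rcases Submodule.mem_sup.1 hz1 with ⟨n, hn, w, hw, rfl⟩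
      rcases Submodule.mem_span_singleton.1 hw with ⟨c, rfl⟩
      have hcx : c • v ∈ X := by
        have : c • v = (n + c • v) - n := by abel
        rw [this]; exact Submodule.sub_mem _ hz2 (hNX hn)
      have hco : c • v ∈ Xᗮ := Submodule.smul_mem _ _ hv
      have : c • v ∈ X ⊓ Xᗮ := ⟨hcx, hco⟩
      rw [Submodule.inf_orthogonal_eq_bot] at this
      simp only [Submodule.mem_bot] at this
      rw [this, add_zero]
      exact hn
    · exact le_inf le_sup_left hNX
  have hvmem : v ∈ N ⊔ ℂ ∙ v :=
    le_sup_right (a := N) (Submodule.mem_span_singleton_self v)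
  refine ⟨⟨?_, by rw [hinf, hN]⟩, ?_⟩
  · intro he
    rw [he] at hvmem
    have : v ∈ X ⊓ Xᗮ := ⟨hvmem, hv⟩
    rw [Submodule.inf_orthogonal_eq_bot] at this
    simp only [Submodule.mem_bot] at this
    exact hv0 this
  · -- Compatible (N ⊔ ℂ ∙ v) X
    rw [compatible_iff_forall]
    intro x
    have hsv : (ℂ ∙ v) ≤ Nᗮ := span_le_orth hvN
    have hsX : (ℂ ∙ v) ≤ Xᗮ := span_le_orth hv
    rw [projOn_sup hsv, projOn_sup hsv]
    have e1 : projOn N (projOn X x) = projOn N x := by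
      refine projOn_eq_of (projOn_mem N x) ?_
      have he : projOn X x - projOn N x = (x - projOn N x) - (x - projOn X x) := by abel
      rw [he]
      exact Submodule.sub_mem _ (sub_projOn_mem N x)
        (Submodule.orthogonal_le hNX (sub_projOn_mem X x))
    have e2 : projOn (ℂ ∙ v) (projOn X x) = 0 :=
      projOn_of_mem_orthogonal (orth_symm hsX (projOn_mem X x))
    have e3 : projOn X (projOn N x) = projOn N x := projOn_of_mem (hNX (projOn_mem N x))
    have e4 : projOn X (projOn (ℂ ∙ v) x) = 0 :=
      projOn_of_mem_orthogonal (hsX (projOn_mem _ x))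
    simp [map_add, e1, e2, e3, e4]

/-- From `fr F + 2 ≤ rank H`, get two "independent" vectors orthogonal to `F`. -/
lemma exists_indep_perp (F : Submodule ℂ H) [FiniteDimensional ℂ F]
    (hF : (fr F : Cardinal) + 2 ≤ Module.rank ℂ H) :
    ∃ a b : H, a ∈ Fᗮ ∧ b ∈ Fᗮ ∧ a ≠ 0 ∧
      ∀ s t : ℂ, s • a + t • b = 0 → s = 0 ∧ t = 0 := by
  have hrank : Module.rank ℂ H = (fr F : Cardinal) + Module.rank ℂ Fᗮ := by
    have h1 := Submodule.rank_sup_add_rank_inf_eq F Fᗮ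
    rw [Submodule.sup_orthogonal_of_hasOrthogonalProjection, Submodule.inf_orthogonal_eq_bot] at h1
    rw [rank_top, rank_bot, add_zero] at h1
    rw [Module.finrank_eq_rank]
    exact h1
  -- key: rank Fᗮ is not ≤ 1
  have hkey : ∀ (G : Submodule ℂ H), Fᗮ ≤ G → FiniteDimensional ℂ G → fr G ≤ 1 → False := by
    intro G hle _ hfr
    have h2 : Module.rank ℂ Fᗮ ≤ 1 := by
      calc Module.rank ℂ Fᗮ ≤ Module.rank ℂ G := Submodule.rank_mono hle
        _ = (fr G : Cardinal) := (Module.finrank_eq_rank ℂ G).symm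
        _ ≤ 1 := by exact_mod_cast Nat.cast_le.mpr hfr
    have h3 : Module.rank ℂ H ≤ (fr F : Cardinal) + 1 := by
      rw [hrank]; exact add_le_add_right h2 _
    have h4 : ((fr F + 2 : ℕ) : Cardinal) ≤ ((fr F + 1 : ℕ) : Cardinal) := by
      push_cast
      exact le_trans hF h3
    have := Nat.cast_le.mp h4
    omega
  have hne : Fᗮ ≠ ⊥ := by
    intro hb
    exact hkey ⊥ (le_of_eq hb) inferInstance (by simp [finrank_bot])
  obtain ⟨a, haF, ha0⟩ := Submodule.exists_mem_ne_zero_of_ne_bot hne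
  have hnle : ¬ (Fᗮ ≤ ℂ ∙ a) := by
    intro hle
    exact hkey (ℂ ∙ a) hle inferInstance (le_of_eq (finrank_span_singleton ha0))
  rw [SetLike.not_le_iff_exists] at hnle
  obtain ⟨b, hbF, hbn⟩ := hnle
  refine ⟨a, b, haF, hbF, ha0, ?_⟩
  intro s t hst
  have ht : t = 0 := by
    by_contra ht0
    apply hbn
    rw [Submodule.mem_span_singleton]
    refine ⟨-t⁻¹ * s, ?_⟩
    have hts : t • b = -(s • a) := eq_neg_of_add_eq_zero_left (by rw [add_comm]; exact hst)
    have h1 : b = t⁻¹ • (-(s • a)) := by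
      rw [← hts, smul_smul, inv_mul_cancel₀ ht0, one_smul]
    rw [h1]
    module
  subst ht
  rw [zero_smul, add_zero, smul_eq_zero] at hst
  exact ⟨hst.resolve_right ha0, rfl⟩

lemma sup_line_inf_orth {N : Submodule ℂ H} {v : H} (hv : v ∈ Nᗮ) :
    (N ⊔ ℂ ∙ v) ⊓ Nᗮ = ℂ ∙ v := by
  apply le_antisymm
  · rintro z ⟨hz1, hz2⟩
    rcases Submodule.mem_sup.1 hz1 with ⟨n, hn, w, hw, rfl⟩
    have hwo : w ∈ Nᗮ := span_le_orth hv hw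
    have : n ∈ N ⊓ Nᗮ := by
      refine ⟨hn, ?_⟩
      have he : n = (n + w) - w := by abel
      rw [he]
      exact Submodule.sub_mem _ hz2 hwo
    rw [Submodule.inf_orthogonal_eq_bot] at this
    simp only [Submodule.mem_bot] at this
    rw [this, zero_add]
    exact hw
  · exact le_inf (le_sup_right (a := N)) (span_le_orth hv)

end Part3
section Part4

open Module Submodule

variable {H : Type*} [NormedAddCommGroup H] [InnerProductSpace ℂ H] [CompleteSpace H]

local notation:max "fr " p:max => Module.finrank ℂ ↥p

/-- Key inner construction: given `N ≤` each member of a finite list of `k`-dimensional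
subspaces, with `fr N = k-1`, and enough room orthogonally, the set of common
ortho-neighbours of the form `N ⊔ line` is infinite. -/
lemma forward_inner {k : ℕ} (hk : 2 ≤ k) {N F : Submodule ℂ H}
    [FiniteDimensional ℂ N] [FiniteDimensional ℂ F]
    (hNfr : fr N = k - 1) (hNF : N ≤ F)
    (hF : (fr F : Cardinal) + 2 ≤ Module.rank ℂ H)
    (P : Submodule ℂ H → Prop)
    (hP : ∀ v : H, v ∈ Fᗮ → v ≠ 0 → P (N ⊔ ℂ ∙ v)) :
    {Z : Submodule ℂ H | P Z}.Infinite := by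
  obtain ⟨a, b, haF, hbF, ha0, hab⟩ := exists_indep_perp F hF
  apply Set.infinite_of_injective_forall_mem
    (f := fun c : ℂ => N ⊔ ℂ ∙ (a + c • b))
  · -- injective
    intro c₁ c₂ hcc
    simp only at hcc
    have hv1 : a + c₁ • b ∈ Nᗮ :=
      Submodule.orthogonal_le hNF (Submodule.add_mem _ haF (Submodule.smul_mem _ _ hbF))
    have hv2 : a + c₂ • b ∈ Nᗮ :=
      Submodule.orthogonal_le hNF (Submodule.add_mem _ haF (Submodule.smul_mem _ _ hbF))
    have h1 : (ℂ ∙ (a + c₁ • b)) = (ℂ ∙ (a + c₂ • b)) := by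
      rw [← sup_line_inf_orth hv1, ← sup_line_inf_orth hv2, hcc]
    have hmem : a + c₁ • b ∈ ℂ ∙ (a + c₂ • b) := by
      rw [← h1]; exact Submodule.mem_span_singleton_self _
    rcases Submodule.mem_span_singleton.1 hmem with ⟨t, ht⟩
    have hz : (t - 1) • a + (t * c₂ - c₁) • b = 0 := by
      have : t • (a + c₂ • b) - (a + c₁ • b) = 0 := by rw [ht]; abel
      rw [← this]
      module
    obtain ⟨h1', h2'⟩ := hab _ _ hz
    have : t = 1 := by
      have := sub_eq_zero.1 h1'; simpa using this
    rw [this] at h2'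
    have h3 := sub_eq_zero.1 h2'
    rw [one_mul] at h3
    exact h3.symm
  · intro c
    have hvF : a + c • b ∈ Fᗮ := Submodule.add_mem _ haF (Submodule.smul_mem _ _ hbF)
    have hv0 : a + c • b ≠ 0 := by
      intro h0
      have : (1 : ℂ) • a + c • b = 0 := by simpa using h0
      exact one_ne_zero (hab _ _ this).1
    exact hP _ hvF hv0

end Part4
section Part5

open Module Submodule

variable {H : Type*} [NormedAddCommGroup H] [InnerProductSpace ℂ H] [CompleteSpace H]

local notation:max "fr " p:max => Module.finrank ℂ ↥p

lemma forward_main {k : ℕ} (hk : 2 ≤ k)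
    (hk4 : (k : Cardinal) + 4 ≤ Module.rank ℂ H)
    {X Y : Submodule ℂ H} (hX : IsDim k X) (hY : IsDim k Y)
    (hadj : AdjacentSub k X Y) :
    {Z : Submodule ℂ H | IsDim k Z ∧ OrthoAdjacent k Z X ∧ OrthoAdjacent k Z Y ∧
      {Z' : Submodule ℂ H | IsDim k Z' ∧ OrthoAdjacent k Z' X ∧ OrthoAdjacent k Z' Y ∧
        OrthoAdjacent k Z' Z}.Infinite}.Infinite := by
  haveI := hX.1; haveI := hY.1
  have hNfr : fr (X ⊓ Y) = k - 1 := hadj.2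
  have hNX : (X ⊓ Y) ≤ X := inf_le_left
  have hNY : (X ⊓ Y) ≤ Y := inf_le_right
  have hfrXY : fr (X ⊔ Y) = k + 1 := by
    have h1 := Submodule.finrank_sup_add_finrank_inf_eq X Y
    rw [hX.2, hY.2, hNfr] at h1
    omega
  have hcard : ∀ (F : Submodule ℂ H), FiniteDimensional ℂ F → fr F ≤ k + 2 →
      (fr F : Cardinal) + 2 ≤ Module.rank ℂ H := by
    intro F _ hle
    have h1 : ((fr F + 2 : ℕ) : Cardinal) ≤ ((k + 4 : ℕ) : Cardinal) :=
      Nat.cast_le.mpr (by omega)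
    have h2 : ((k + 4 : ℕ) : Cardinal) = (k : Cardinal) + 4 := by push_cast; ring
    have h3 : ((fr F + 2 : ℕ) : Cardinal) = (fr F : Cardinal) + 2 := by push_cast; ring
    rw [h2, h3] at h1
    exact le_trans h1 hk4
  apply forward_inner (F := X ⊔ Y) hk hNfr (le_trans hNX le_sup_left)
    (hcard (X ⊔ Y) inferInstance (by omega))
  intro v hvF hv0
  have hvX : v ∈ Xᗮ := Submodule.orthogonal_le le_sup_left hvF
  have hvY : v ∈ Yᗮ := Submodule.orthogonal_le le_sup_right hvF
  have hvN : v ∈ (X ⊓ Y)ᗮ := Submodule.orthogonal_le hNX hvX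
  have hZdim : IsDim k ((X ⊓ Y) ⊔ ℂ ∙ v) := isdim_sup_line (by omega) hNfr hvN hv0
  haveI := hZdim.1
  refine ⟨hZdim, orthoAdj_helper hNX hNfr hvX hv0, orthoAdj_helper hNY hNfr hvY hv0, ?_⟩
  have hsub1 : X ⊔ Y ≤ (X ⊔ Y) ⊔ ℂ ∙ v := le_sup_left
  have hfrF' : fr ((X ⊔ Y) ⊔ ℂ ∙ v) ≤ k + 2 := by
    have h1 := Submodule.finrank_sup_add_finrank_inf_eq (X ⊔ Y) (ℂ ∙ v)
    rw [finrank_span_singleton hv0, hfrXY] at h1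
    omega
  apply forward_inner (F := (X ⊔ Y) ⊔ ℂ ∙ v) hk hNfr
    (le_trans hNX (le_trans le_sup_left hsub1))
    (hcard ((X ⊔ Y) ⊔ ℂ ∙ v) inferInstance hfrF')
  intro w hwF hw0
  have hwX : w ∈ Xᗮ := Submodule.orthogonal_le (le_trans le_sup_left hsub1) hwF
  have hwY : w ∈ Yᗮ := Submodule.orthogonal_le (le_trans le_sup_right hsub1) hwF
  have hwZ : w ∈ ((X ⊓ Y) ⊔ ℂ ∙ v)ᗮ := by
    refine Submodule.orthogonal_le ?_ hwF
    exact sup_le (le_trans hNX (le_trans le_sup_left hsub1)) le_sup_right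
  have hwN : w ∈ (X ⊓ Y)ᗮ := Submodule.orthogonal_le hNX hwX
  have hZ'dim : IsDim k ((X ⊓ Y) ⊔ ℂ ∙ w) := isdim_sup_line (by omega) hNfr hwN hw0
  exact ⟨hZ'dim, orthoAdj_helper hNX hNfr hwX hw0, orthoAdj_helper hNY hNfr hwY hw0,
    orthoAdj_helper le_sup_left hNfr hwZ hw0⟩

end Part5
section Part6

open Module Submodule

variable {H : Type*} [NormedAddCommGroup H] [InnerProductSpace ℂ H] [CompleteSpace H]

local notation:max "fr " p:max => Module.finrank ℂ ↥p

lemma inf_orth_bot' {A B C : Submodule ℂ H} (h1 : A ≤ C) (h2 : B ≤ Cᗮ) : A ⊓ B = ⊥ := by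
  apply le_antisymm _ bot_le
  intro z hz
  have : z ∈ C ⊓ Cᗮ := ⟨h1 hz.1, h2 hz.2⟩
  rwa [Submodule.inf_orthogonal_eq_bot] at this

lemma inf_inf_orth (A B M : Submodule ℂ H) :
    (A ⊓ Mᗮ) ⊓ (B ⊓ Mᗮ) = (A ⊓ B) ⊓ Mᗮ := by
  rw [inf_assoc, inf_eq_right.mpr (inf_le_right : B ⊓ Mᗮ ≤ Mᗮ), ← inf_assoc]

lemma compat_reduce {M A0 B0 : Submodule ℂ H} [FiniteDimensional ℂ M]
    [FiniteDimensional ℂ A0] [FiniteDimensional ℂ B0]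
    (hA0 : A0 ≤ Mᗮ) (hB0 : B0 ≤ Mᗮ)
    (h : Compatible (M ⊔ A0) (M ⊔ B0)) : Compatible A0 B0 := by
  rw [compatible_iff_forall] at h ⊢
  intro x
  have hx := h x
  rw [projOn_sup hA0, projOn_sup hB0, projOn_sup hA0, projOn_sup hB0] at hx
  have e1 : projOn M (projOn M x) = projOn M x := projOn_of_mem (projOn_mem M x)
  have e2 : projOn M (projOn B0 x) = 0 :=
    projOn_of_mem_orthogonal (hB0 (projOn_mem B0 x))
  have e3 : projOn A0 (projOn M x) = 0 :=
    projOn_of_mem_orthogonal (orth_symm hA0 (projOn_mem M x))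
  have e4 : projOn B0 (projOn M x) = 0 :=
    projOn_of_mem_orthogonal (orth_symm hB0 (projOn_mem M x))
  have e5 : projOn M (projOn A0 x) = 0 :=
    projOn_of_mem_orthogonal (hA0 (projOn_mem A0 x))
  simp only [map_add, e1, e2, e3, e4, e5, add_zero, zero_add] at hx
  exact add_left_cancel hx

lemma common_nbr_struct {k : ℕ} (hk : 2 ≤ k) {X Y Z : Submodule ℂ H}
    [FiniteDimensional ℂ X] [FiniteDimensional ℂ Y] [FiniteDimensional ℂ Z]
    (hXfr : fr X = k) (hYfr : fr Y = k) (hZfr : fr Z = k)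
    (hXY : X ≠ Y) (hne : fr (X ⊓ Y) ≠ k - 1)
    (hZX : fr (Z ⊓ X) = k - 1) (hZY : fr (Z ⊓ Y) = k - 1) :
    fr (X ⊓ Y) = k - 2 ∧ X ⊓ Y ≤ Z ∧ Z ≤ X ⊔ Y := by
  have hXYk : fr (X ⊓ Y) ≤ k := by
    have := Submodule.finrank_mono (inf_le_left : X ⊓ Y ≤ X)
    omega
  have hXYnek : fr (X ⊓ Y) ≠ k := by
    intro h
    have h1 : X ⊓ Y = X :=
      Submodule.eq_of_le_of_finrank_le inf_le_left (by omega)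
    have h2 : X ≤ Y := by rw [← h1]; exact inf_le_right
    exact hXY (Submodule.eq_of_le_of_finrank_le h2 (by omega))
  have hXYle : fr (X ⊓ Y) ≤ k - 2 := by omega
  have hABne : Z ⊓ X ≠ Z ⊓ Y := by
    intro h
    have hle : Z ⊓ X ≤ X ⊓ Y := le_inf inf_le_right (h ▸ inf_le_right)
    have := Submodule.finrank_mono hle
    omega
  have hinf_le : (Z ⊓ X) ⊓ (Z ⊓ Y) ≤ X ⊓ Y := le_inf
    (le_trans inf_le_left inf_le_right) (le_trans inf_le_right inf_le_right)
  have hinf_fr : fr ((Z ⊓ X) ⊓ (Z ⊓ Y)) ≤ k - 2 := by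
    have := Submodule.finrank_mono hinf_le
    omega
  have hsum := Submodule.finrank_sup_add_finrank_inf_eq (Z ⊓ X) (Z ⊓ Y)
  rw [hZX, hZY] at hsum
  have hsup_le : (Z ⊓ X) ⊔ (Z ⊓ Y) ≤ Z := sup_le inf_le_left inf_le_left
  have hsup_fr : fr ((Z ⊓ X) ⊔ (Z ⊓ Y)) ≤ k := by
    have := Submodule.finrank_mono hsup_le
    omega
  have hsup_eq : (Z ⊓ X) ⊔ (Z ⊓ Y) = Z :=
    Submodule.eq_of_le_of_finrank_le hsup_le (by omega)
  have hinf_eq : (Z ⊓ X) ⊓ (Z ⊓ Y) = X ⊓ Y := by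
    refine Submodule.eq_of_le_of_finrank_le hinf_le ?_
    omega
  refine ⟨by rw [← hinf_eq]; omega, by rw [← hinf_eq]; exact le_trans inf_le_left inf_le_left, ?_⟩
  rw [← hsup_eq]
  exact sup_le (le_trans inf_le_right le_sup_left) (le_trans inf_le_right le_sup_right)

lemma nbr_red {k : ℕ} (hk : 2 ≤ k) {M X Z : Submodule ℂ H}
    [FiniteDimensional ℂ X] [FiniteDimensional ℂ Z]
    (hMX : M ≤ X) (hMZ : M ≤ Z) (hMfr : fr M = k - 2)
    (hXfr : fr X = k) (hZfr : fr Z = k) (hZX : fr (Z ⊓ X) = k - 1)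
    (hcomp : Compatible Z X) :
    fr (Z ⊓ Mᗮ) = 2 ∧ fr ((Z ⊓ Mᗮ) ⊓ (X ⊓ Mᗮ)) = 1 ∧
    fr ((Z ⊓ Mᗮ) ⊓ (X ⊓ Mᗮ)ᗮ) = 1 ∧ Compatible (Z ⊓ Mᗮ) (X ⊓ Mᗮ) := by
  haveI : FiniteDimensional ℂ M := Submodule.finiteDimensional_of_le hMX
  have h1 := finrank_inf_orth_of_le hMZ
  have hfrL : fr (Z ⊓ Mᗮ) = 2 := by omega
  have h2 := finrank_inf_orth_of_le (le_inf hMZ hMX : M ≤ Z ⊓ X)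
  rw [hZX] at h2
  have hfrA : fr ((Z ⊓ Mᗮ) ⊓ (X ⊓ Mᗮ)) = 1 := by
    rw [inf_inf_orth]
    omega
  have hcompL : Compatible (Z ⊓ Mᗮ) (X ⊓ Mᗮ) := by
    refine compat_reduce (inf_le_right : Z ⊓ Mᗮ ≤ Mᗮ) (inf_le_right : X ⊓ Mᗮ ≤ Mᗮ) ?_
    rw [sup_inf_orth_of_le hMZ, sup_inf_orth_of_le hMX]
    exact hcomp
  have h3 := compat_finrank hcompL
  rw [hfrA, hfrL] at h3
  exact ⟨hfrL, hfrA, by omega, hcompL⟩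

end Part6
section Part7

open Module Submodule

variable {H : Type*} [NormedAddCommGroup H] [InnerProductSpace ℂ H] [CompleteSpace H]

local notation:max "fr " p:max => Module.finrank ℂ ↥p

lemma inter_line_cases {L L' X0 Y0 : Submodule ℂ H}
    [FiniteDimensional ℂ L] [FiniteDimensional ℂ L']
    (hdisj : X0 ⊓ Y0 = ⊥)
    (hL : (L ⊓ X0) ⊔ (L ⊓ Y0) = L) (hL' : (L' ⊓ X0) ⊔ (L' ⊓ Y0) = L')
    (hfrA : fr (L ⊓ X0) = 1) (hfrB : fr (L ⊓ Y0) = 1) (hfr : fr (L ⊓ L') = 1) :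
    L ⊓ L' = L ⊓ X0 ∨ L ⊓ L' = L ⊓ Y0 := by
  obtain ⟨w, hwLL', hw0⟩ := exists_ne_zero_of_finrank_one hfr
  have hwL : w ∈ (L ⊓ X0) ⊔ (L ⊓ Y0) := by rw [hL]; exact hwLL'.1
  have hwL' : w ∈ (L' ⊓ X0) ⊔ (L' ⊓ Y0) := by rw [hL']; exact hwLL'.2
  rcases Submodule.mem_sup.1 hwL with ⟨p, hp, q, hq, hpq⟩
  rcases Submodule.mem_sup.1 hwL' with ⟨p', hp', q', hq', hpq'⟩
  have hpp' : p = p' := by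
    have h1 : p - p' = q' - q := by
      have : p + q = p' + q' := by rw [hpq, hpq']
      have h2 : p + q - (p' + q') = 0 := by rw [this]; abel
      have h3 : (p - p') - (q' - q) = 0 := by rw [← h2]; abel
      have := sub_eq_zero.1 h3
      exact this
    have h2 : p - p' ∈ X0 ⊓ Y0 := by
      refine ⟨Submodule.sub_mem _ hp.2 hp'.2, ?_⟩
      rw [h1]
      exact Submodule.sub_mem _ hq'.2 hq.2
    rw [hdisj] at h2
    simp only [Submodule.mem_bot] at h2
    exact sub_eq_zero.1 h2
  have hqq' : q = q' := by
    have : p + q = p' + q' := by rw [hpq, hpq']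
    rw [hpp'] at this
    exact add_left_cancel this
  have hpmem : p ∈ L ⊓ L' := ⟨hp.1, by rw [hpp']; exact hp'.1⟩
  have hqmem : q ∈ L ⊓ L' := ⟨hq.1, by rw [hqq']; exact hq'.1⟩
  have hspan : L ⊓ L' = ℂ ∙ w := eq_span_of_finrank_one hfr hwLL' hw0
  have hcases : p = 0 ∨ q = 0 := by
    by_contra hcon
    push_neg at hcon
    obtain ⟨hp0, hq0⟩ := hcon
    rw [hspan] at hpmem
    rcases Submodule.mem_span_singleton.1 hpmem with ⟨s, hs⟩
    have hs0 : s ≠ 0 := by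
      intro h; rw [h, zero_smul] at hs; exact hp0 hs.symm
    have hwX0 : w ∈ X0 := by
      have : w = s⁻¹ • p := by
        rw [← hs, smul_smul, inv_mul_cancel₀ hs0, one_smul]
      rw [this]
      exact Submodule.smul_mem _ _ hp.2
    have hqX0 : q ∈ X0 := by
      have : q = w - p := by rw [← hpq]; abel
      rw [this]
      exact Submodule.sub_mem _ hwX0 hp.2
    have : q ∈ X0 ⊓ Y0 := ⟨hqX0, hq.2⟩
    rw [hdisj] at this
    simp only [Submodule.mem_bot] at this
    exact hq0 this
  rcases hcases with h0 | h0
  · right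
    have hwq : w = q := by rw [← hpq, h0, zero_add]
    have hwB : w ∈ L ⊓ Y0 := ⟨hwLL'.1, by rw [hwq]; exact hq.2⟩
    rw [hspan, eq_span_of_finrank_one hfrB hwB hw0]
  · left
    have hwp : w = p := by rw [← hpq, h0, add_zero]
    have hwA : w ∈ L ⊓ X0 := ⟨hwLL'.1, by rw [hwp]; exact hp.2⟩
    rw [hspan, eq_span_of_finrank_one hfrA hwA hw0]

lemma xtype_unique {W X0 L L' : Submodule ℂ H}
    [FiniteDimensional ℂ W]
    (hX0W : X0 ≤ W) (hfrX0 : fr X0 = 2) (hfrW : fr W = 4)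
    (hLW : L ≤ W) (hL'W : L' ≤ W)
    (hfrL : fr L = 2)
    (hfrA : fr (L ⊓ X0) = 1) (hfrLu : fr (L ⊓ X0ᗮ) = 1)
    (hfrA' : fr (L' ⊓ X0) = 1) (hfrU' : fr (L' ⊓ X0ᗮ) = 1)
    (hL'dec : (L' ⊓ X0) ⊔ (L' ⊓ X0ᗮ) = L')
    (hcomp : Compatible L L') (hfrLL' : fr (L ⊓ L') = 1)
    (hcase : L ⊓ L' = L ⊓ X0) :
    L' = (L ⊓ X0) ⊔ ((W ⊓ X0ᗮ) ⊓ (L ⊓ X0ᗮ)ᗮ) := by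
  haveI : FiniteDimensional ℂ L := Submodule.finiteDimensional_of_le hLW
  haveI : FiniteDimensional ℂ L' := Submodule.finiteDimensional_of_le hL'W
  haveI : FiniteDimensional ℂ X0 := Submodule.finiteDimensional_of_le hX0W
  have hAL' : L ⊓ X0 ≤ L' := hcase ▸ (inf_le_right : L ⊓ L' ≤ L')
  have hAA' : L ⊓ X0 = L' ⊓ X0 := by
    refine Submodule.eq_of_le_of_finrank_le (le_inf hAL' inf_le_right) (by omega)
  have hfrT : fr (L ⊓ L'ᗮ) = 1 := by
    have h3 := compat_finrank hcomp
    rw [hfrLL', hfrL] at h3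
    omega
  have hLuAo : L ⊓ X0ᗮ ≤ L ⊓ (L ⊓ X0)ᗮ :=
    le_inf inf_le_left (le_trans inf_le_right (Submodule.orthogonal_le inf_le_right))
  have hfr_LAo : fr (L ⊓ (L ⊓ X0)ᗮ) ≤ 1 := by
    have hd : (L ⊓ X0) ⊓ (L ⊓ (L ⊓ X0)ᗮ) = ⊥ :=
      inf_orth_bot' (le_refl (L ⊓ X0)) inf_le_right
    have hs := Submodule.finrank_sup_add_finrank_inf_eq (L ⊓ X0) (L ⊓ (L ⊓ X0)ᗮ)
    rw [hd] at hs
    have hle : (L ⊓ X0) ⊔ (L ⊓ (L ⊓ X0)ᗮ) ≤ L := sup_le inf_le_left inf_le_left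
    have := Submodule.finrank_mono hle
    simp only [finrank_bot, add_zero] at hs
    omega
  have hLu_eq : L ⊓ X0ᗮ = L ⊓ (L ⊓ X0)ᗮ :=
    Submodule.eq_of_le_of_finrank_le hLuAo (by omega)
  have hT_le : L ⊓ L'ᗮ ≤ L ⊓ X0ᗮ := by
    rw [hLu_eq]
    exact le_inf inf_le_left (le_trans inf_le_right (Submodule.orthogonal_le hAL'))
  have hT : L ⊓ L'ᗮ = L ⊓ X0ᗮ :=
    Submodule.eq_of_le_of_finrank_le hT_le (by omega)
  have hLu_perp_L' : L' ≤ (L ⊓ X0ᗮ)ᗮ :=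
    orth_symm (by rw [← hT]; exact inf_le_right)
  have hR : fr (W ⊓ X0ᗮ) = 2 := by
    have := finrank_inf_orth_of_le hX0W
    omega
  have hLuR : L ⊓ X0ᗮ ≤ W ⊓ X0ᗮ := le_inf (le_trans inf_le_left hLW) inf_le_right
  have hfrS : fr ((W ⊓ X0ᗮ) ⊓ (L ⊓ X0ᗮ)ᗮ) ≤ 1 := by
    have hd : ((W ⊓ X0ᗮ) ⊓ (L ⊓ X0ᗮ)ᗮ) ⊓ (L ⊓ X0ᗮ) = ⊥ :=
      inf_orth_bot' (inf_le_right : (W ⊓ X0ᗮ) ⊓ (L ⊓ X0ᗮ)ᗮ ≤ (L ⊓ X0ᗮ)ᗮ)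
        (Submodule.le_orthogonal_orthogonal _)
    have hs := Submodule.finrank_sup_add_finrank_inf_eq
      ((W ⊓ X0ᗮ) ⊓ (L ⊓ X0ᗮ)ᗮ) (L ⊓ X0ᗮ)
    rw [hd] at hs
    have hle : ((W ⊓ X0ᗮ) ⊓ (L ⊓ X0ᗮ)ᗮ) ⊔ (L ⊓ X0ᗮ) ≤ W ⊓ X0ᗮ :=
      sup_le inf_le_left hLuR
    have := Submodule.finrank_mono hle
    simp only [finrank_bot, add_zero] at hs
    omega
  have hU'S : L' ⊓ X0ᗮ ≤ (W ⊓ X0ᗮ) ⊓ (L ⊓ X0ᗮ)ᗮ :=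
    le_inf (le_inf (le_trans inf_le_left hL'W) inf_le_right)
      (le_trans inf_le_left hLu_perp_L')
  have hU'eq : L' ⊓ X0ᗮ = (W ⊓ X0ᗮ) ⊓ (L ⊓ X0ᗮ)ᗮ :=
    Submodule.eq_of_le_of_finrank_le hU'S (by omega)
  rw [← hL'dec, ← hAA', hU'eq]

end Part7
section Part8

open Module Submodule

variable {H : Type*} [NormedAddCommGroup H] [InnerProductSpace ℂ H] [CompleteSpace H]

local notation:max "fr " p:max => Module.finrank ℂ ↥p

lemma backward_main {k : ℕ} (hk : 2 ≤ k) {X Y Z : Submodule ℂ H}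
    (hX : IsDim k X) (hY : IsDim k Y)
    (hXY : X ≠ Y) (hne : fr (X ⊓ Y) ≠ k - 1)
    (hZ : IsDim k Z) (hZX : OrthoAdjacent k Z X) (hZY : OrthoAdjacent k Z Y) :
    ¬ ({Z' : Submodule ℂ H | IsDim k Z' ∧ OrthoAdjacent k Z' X ∧ OrthoAdjacent k Z' Y ∧
        OrthoAdjacent k Z' Z}.Infinite) := by
  haveI := hX.1; haveI := hY.1; haveI := hZ.1
  intro hinf
  obtain ⟨hMfr, hMZ, hZXY⟩ :=
    common_nbr_struct hk hX.2 hY.2 hZ.2 hXY hne hZX.1.2 hZY.1.2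
  have hMX : X ⊓ Y ≤ X := inf_le_left
  have hMY : X ⊓ Y ≤ Y := inf_le_right
  obtain ⟨hfrL, hfrA, hfrLu, hcompLX⟩ :=
    nbr_red hk hMX hMZ hMfr hX.2 hZ.2 hZX.1.2 hZX.2
  have hZYfr : fr (Z ⊓ Y) = k - 1 := hZY.1.2
  obtain ⟨-, hfrB, hfrLv, hcompLY⟩ :=
    nbr_red hk hMY hMZ hMfr hY.2 hZ.2 hZYfr hZY.2
  -- ambient 4-dimensional space W
  have hMsup : X ⊓ Y ≤ X ⊔ Y := le_trans hMX le_sup_left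
  have hfrXYsup : fr (X ⊔ Y) = k + 2 := by
    have h1 := Submodule.finrank_sup_add_finrank_inf_eq X Y
    rw [hX.2, hY.2, hMfr] at h1
    omega
  have hW4 : fr ((X ⊔ Y) ⊓ (X ⊓ Y)ᗮ) = 4 := by
    have := finrank_inf_orth_of_le hMsup
    omega
  have hX0W : X ⊓ (X ⊓ Y)ᗮ ≤ (X ⊔ Y) ⊓ (X ⊓ Y)ᗮ :=
    le_inf (le_trans inf_le_left le_sup_left) inf_le_right
  have hY0W : Y ⊓ (X ⊓ Y)ᗮ ≤ (X ⊔ Y) ⊓ (X ⊓ Y)ᗮ :=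
    le_inf (le_trans inf_le_left le_sup_right) inf_le_right
  have hX0fr : fr (X ⊓ (X ⊓ Y)ᗮ) = 2 := by
    have := finrank_inf_orth_of_le hMX
    rw [hX.2] at this
    omega
  have hY0fr : fr (Y ⊓ (X ⊓ Y)ᗮ) = 2 := by
    have := finrank_inf_orth_of_le hMY
    rw [hY.2] at this
    omega
  have hdisj0 : (X ⊓ (X ⊓ Y)ᗮ) ⊓ (Y ⊓ (X ⊓ Y)ᗮ) = ⊥ := by
    rw [inf_inf_orth]
    exact inf_orth_bot' (le_refl _) (le_refl _)
  have hLW : Z ⊓ (X ⊓ Y)ᗮ ≤ (X ⊔ Y) ⊓ (X ⊓ Y)ᗮ :=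
    le_inf (le_trans inf_le_left hZXY) inf_le_right
  -- decomposition of L
  have hLdec : ((Z ⊓ (X ⊓ Y)ᗮ) ⊓ (X ⊓ (X ⊓ Y)ᗮ)) ⊔ ((Z ⊓ (X ⊓ Y)ᗮ) ⊓ (Y ⊓ (X ⊓ Y)ᗮ))
      = Z ⊓ (X ⊓ Y)ᗮ := by
    refine sup_eq_of_disjoint_finrank inf_le_left inf_le_left ?_ (by omega)
    apply le_antisymm _ bot_le
    refine le_trans (le_inf ?_ ?_) (le_of_eq hdisj0)
    · exact le_trans inf_le_left inf_le_right
    · exact le_trans inf_le_right inf_le_right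
  -- the two candidate subspaces
  set Cx := (X ⊓ Y) ⊔ ((Z ⊓ (X ⊓ Y)ᗮ) ⊓ (X ⊓ (X ⊓ Y)ᗮ) ⊔
    ((((X ⊔ Y) ⊓ (X ⊓ Y)ᗮ) ⊓ (X ⊓ (X ⊓ Y)ᗮ)ᗮ) ⊓ ((Z ⊓ (X ⊓ Y)ᗮ) ⊓ (X ⊓ (X ⊓ Y)ᗮ)ᗮ)ᗮ))
    with hCx
  set Cy := (X ⊓ Y) ⊔ ((Z ⊓ (X ⊓ Y)ᗮ) ⊓ (Y ⊓ (X ⊓ Y)ᗮ) ⊔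
    ((((X ⊔ Y) ⊓ (X ⊓ Y)ᗮ) ⊓ (Y ⊓ (X ⊓ Y)ᗮ)ᗮ) ⊓ ((Z ⊓ (X ⊓ Y)ᗮ) ⊓ (Y ⊓ (X ⊓ Y)ᗮ)ᗮ)ᗮ))
    with hCy
  have key : ∀ Z' ∈ {Z' : Submodule ℂ H | IsDim k Z' ∧ OrthoAdjacent k Z' X ∧
      OrthoAdjacent k Z' Y ∧ OrthoAdjacent k Z' Z}, Z' = Cx ∨ Z' = Cy := by
    rintro Z' ⟨hZ'dim, hZ'X, hZ'Y, hZ'Z⟩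
    haveI := hZ'dim.1
    obtain ⟨-, hMZ', hZ'XY⟩ :=
      common_nbr_struct hk hX.2 hY.2 hZ'dim.2 hXY hne hZ'X.1.2 hZ'Y.1.2
    obtain ⟨hfrL', hfrA', hfrU', hcompL'X⟩ :=
      nbr_red hk hMX hMZ' hMfr hX.2 hZ'dim.2 hZ'X.1.2 hZ'X.2
    have hZ'Yfr : fr (Z' ⊓ Y) = k - 1 := hZ'Y.1.2
    obtain ⟨-, hfrB', hfrV', hcompL'Y⟩ :=
      nbr_red hk hMY hMZ' hMfr hY.2 hZ'dim.2 hZ'Yfr hZ'Y.2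
    have hL'W : Z' ⊓ (X ⊓ Y)ᗮ ≤ (X ⊔ Y) ⊓ (X ⊓ Y)ᗮ :=
      le_inf (le_trans inf_le_left hZ'XY) inf_le_right
    have hL'dec : ((Z' ⊓ (X ⊓ Y)ᗮ) ⊓ (X ⊓ (X ⊓ Y)ᗮ)) ⊔ ((Z' ⊓ (X ⊓ Y)ᗮ) ⊓ (Y ⊓ (X ⊓ Y)ᗮ))
        = Z' ⊓ (X ⊓ Y)ᗮ := by
      refine sup_eq_of_disjoint_finrank inf_le_left inf_le_left ?_ (by omega)
      apply le_antisymm _ bot_le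
      refine le_trans (le_inf ?_ ?_) (le_of_eq hdisj0)
      · exact le_trans inf_le_left inf_le_right
      · exact le_trans inf_le_right inf_le_right
    -- fr (L ⊓ L') = 1 and compatibility
    have hZZ'fr : fr (Z ⊓ Z') = k - 1 := by
      rw [inf_comm]
      exact hZ'Z.1.2
    have hfrLL' : fr ((Z ⊓ (X ⊓ Y)ᗮ) ⊓ (Z' ⊓ (X ⊓ Y)ᗮ)) = 1 := by
      rw [inf_inf_orth]
      have := finrank_inf_orth_of_le (le_inf hMZ hMZ' : X ⊓ Y ≤ Z ⊓ Z')
      rw [hZZ'fr] at this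
      omega
    have hcompLL' : Compatible (Z ⊓ (X ⊓ Y)ᗮ) (Z' ⊓ (X ⊓ Y)ᗮ) := by
      refine compat_reduce (inf_le_right : Z ⊓ (X ⊓ Y)ᗮ ≤ (X ⊓ Y)ᗮ)
        (inf_le_right : Z' ⊓ (X ⊓ Y)ᗮ ≤ (X ⊓ Y)ᗮ) ?_
      rw [sup_inf_orth_of_le hMZ, sup_inf_orth_of_le hMZ']
      exact compat_symm hZ'Z.2
    haveI : FiniteDimensional ℂ ↥((X ⊔ Y) ⊓ (X ⊓ Y)ᗮ) := inferInstance
    rcases inter_line_cases hdisj0 hLdec hL'dec hfrA hfrB hfrLL' with hcase | hcase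
    · left
      have := xtype_unique hX0W hX0fr hW4 hLW hL'W hfrL hfrA hfrLu hfrA' hfrU'
        (compat_sup_eq hcompL'X) hcompLL' hfrLL' hcase
      rw [← sup_inf_orth_of_le hMZ', this, hCx]
    · right
      have := xtype_unique hY0W hY0fr hW4 hLW hL'W hfrL hfrB hfrLv hfrB' hfrV'
        (compat_sup_eq hcompL'Y) hcompLL' hfrLL' hcase
      rw [← sup_inf_orth_of_le hMZ', this, hCy]
  have hsub : {Z' : Submodule ℂ H | IsDim k Z' ∧ OrthoAdjacent k Z' X ∧
      OrthoAdjacent k Z' Y ∧ OrthoAdjacent k Z' Z} ⊆ {Cx, Cy} := by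
    intro Z' hZ'
    rcases key Z' hZ' with h | h
    · exact Set.mem_insert_iff.2 (Or.inl h)
    · exact Set.mem_insert_iff.2 (Or.inr (Set.mem_singleton_iff.2 h))
  exact hinf (Set.Finite.subset ((Set.finite_singleton Cy).insert Cx) hsub)

end Part8
/-- Suppose `4 ≤ 2k ≤ dim H`, `k ≤ dim H - 4`, and let `X, Y` be `k`-dimensional subspaces
of `H` at distance `2` in `Γ⊥_k(H)`. Then `X, Y` are adjacent and non-compatible if and only
if there are infinitely many `k`-dimensional subspaces `Z` ortho-adjacent to both `X, Y` and
such that there are infinitely many `k`-dimensional subspaces `Z'` ortho-adjacent to each of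
`X, Y, Z`. -/
theorem adjacent_noncompatible_iff_infinite_infinite
    (k : ℕ) (hk : 2 ≤ k) (h2k : 2 * (k : Cardinal) ≤ Module.rank ℂ H)
    (hk4 : (k : Cardinal) + 4 ≤ Module.rank ℂ H)
    (X Y : Submodule ℂ H) (hX : IsDim k X) (hY : IsDim k Y)
    (hdist : (orthoGrassmannGraph H k).dist ⟨X, hX⟩ ⟨Y, hY⟩ = 2) :
    (AdjacentSub k X Y ∧ ¬ Compatible X Y) ↔
      {Z : Submodule ℂ H | IsDim k Z ∧ OrthoAdjacent k Z X ∧ OrthoAdjacent k Z Y ∧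
        {Z' : Submodule ℂ H | IsDim k Z' ∧ OrthoAdjacent k Z' X ∧ OrthoAdjacent k Z' Y ∧
          OrthoAdjacent k Z' Z}.Infinite}.Infinite := by
  haveI := hX.1
  haveI := hY.1
  have hXY : X ≠ Y := by
    intro h
    have heq : (⟨X, hX⟩ : {X : Submodule ℂ H // IsDim k X}) = ⟨Y, hY⟩ := Subtype.ext h
    rw [heq, SimpleGraph.dist_self] at hdist
    omega
  have hnadj : ¬ OrthoAdjacent k X Y := by
    intro h
    have hadj : (orthoGrassmannGraph H k).Adj ⟨X, hX⟩ ⟨Y, hY⟩ := h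
    rw [← SimpleGraph.dist_eq_one_iff_adj] at hadj
    omega
  constructor
  · rintro ⟨hadj, -⟩
    exact forward_main hk hk4 hX hY hadj
  · intro hinf
    have hfr : Module.finrank ℂ ↥(X ⊓ Y) = k - 1 := by
      by_contra hne
      obtain ⟨Z, hZdim, hZX, hZY, hZinf⟩ := hinf.nonempty
      exact backward_main hk hX hY hXY hne hZdim hZX hZY hZinf
    refine ⟨⟨hXY, hfr⟩, ?_⟩
    intro hc
    exact hnadj ⟨⟨hXY, hfr⟩, hc⟩

end
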